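/- Let F be a field and 2k ≤ n. Then FΩ_k decomposes as a direct sum of F-vector spaces FΩ_k = FΩ_k^{>0} ⊕ S^{k,k}, where FΩ_k^{>0} is spanned by the k-subsets with positive threshold and S^{k,k} is the Specht module spanned by the polytabloids e_t over all (n−k,k)-tableaux t. -/

import Mathlib

/-- The density `d^ω_i = |ω ∩ {1,...,2i-1}|`. -/
def dens (ω : Finset ℕ) (i : ℕ) : ℕ := (ω ∩ Finset.Icc 1 (2 * i - 1)).card

/-- The threshold of `ω`: `max({0} ∪ {i ∈ {1,...,m} : d^ω_i = i})`, `m = ⌊n/2⌋+1`. -/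
def threshold (n : ℕ) (ω : Finset ℕ) : ℕ :=
  ((Finset.Icc 1 (n / 2 + 1)).filter fun i => dens ω i = i).sup id

/-- `a`, `b` encode an `(n−k,k)`-tableau `t`: `a j` is the entry of the first row in
column `j` (0-indexed, `j < n−k`), `b j` the entry of the second row in column `j`,
and all entries together enumerate `{1,...,n}` bijectively. -/
def IsTableau (n k : ℕ) (a : ℕ → ℕ) (b : Fin k → ℕ) : Prop :=
  Set.InjOn a (Set.Iio (n - k)) ∧ Function.Injective b ∧
  (∀ j : Fin k, ∀ j' < n - k, b j ≠ a j') ∧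
  ((Finset.range (n - k)).image a ∪ Finset.univ.image b) = Finset.Icc 1 n

/-- The polytabloid `e_t = {t}·κ_t`: the signed sum over the column stabilizer (a
subset `ε` of the `k` full columns records which columns are swapped) of the
resulting second-row `k`-subsets. -/
noncomputable def polytabloid (F : Type) [Field F] (k : ℕ) (a : ℕ → ℕ) (b : Fin k → ℕ) :
    Finset ℕ →₀ F :=
  ∑ ε : Finset (Fin k), ((-1 : F) ^ ε.card) •
    Finsupp.single ((Finset.univ : Finset (Fin k)).image fun j =>
      if j ∈ ε then a j.val else b j) (1 : F)

section AuxOmegaDecomp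
open Finset MvPolynomial

noncomputable def LL (F : Type) [Field F] : MvPolynomial ℕ F →ₗ[F] (Finset ℕ →₀ F) :=
  Finsupp.lmapDomain F F (fun d : ℕ →₀ ℕ => d.support) ∘ₗ
    (AddMonoidAlgebra.coeffLinearEquiv F).toLinearMap

lemma LL_monomial (F : Type) [Field F] (d : ℕ →₀ ℕ) (c : F) :
    LL F (monomial d c) = Finsupp.single d.support c := by
  change Finsupp.mapDomain (fun d : ℕ →₀ ℕ => d.support) (Finsupp.single d c) = _
  exact Finsupp.mapDomain_single

noncomputable def Ppoly (F : Type) [Field F] {k : ℕ} (p : Fin k → ℕ × ℕ) : MvPolynomial ℕ F :=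
  ∏ j, (X (p j).2 - X (p j).1)

lemma prod_X_eq (F : Type) [Field F] {k : ℕ} (s : Finset (Fin k)) (c : Fin k → ℕ) :
    (∏ j ∈ s, (X (c j) : MvPolynomial ℕ F)) = monomial (∑ j ∈ s, Finsupp.single (c j) 1) 1 := by
  induction s using Finset.induction with
  | empty => simp
  | insert _ _ h ih =>
      rw [Finset.prod_insert h, Finset.sum_insert h, ih, X, monomial_mul, one_mul]

lemma support_sum_single {k : ℕ} (c : Fin k → ℕ) :
    (∑ j, Finsupp.single (c j) (1 : ℕ)).support = Finset.univ.image c := by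
  ext v
  simp only [Finsupp.mem_support_iff, Finsupp.finset_sum_apply, Finset.mem_image, Finset.mem_univ,
    true_and]
  rw [← not_iff_not]
  push_neg
  rw [Finset.sum_eq_zero_iff]
  constructor
  · intro h j
    have := h j (Finset.mem_univ j)
    simp only [Finsupp.single_apply] at this
    by_contra hc
    rw [if_pos hc] at this; exact one_ne_zero this
  · intro h j _
    simp [Finsupp.single_apply, h j]

lemma EL (F : Type) [Field F] {k : ℕ} (p : Fin k → ℕ × ℕ) :
    LL F (Ppoly F p) = ∑ ε : Finset (Fin k), ((-1 : F) ^ ε.card) •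
      Finsupp.single (Finset.univ.image fun j => if j ∈ ε then (p j).1 else (p j).2) 1 := by
  have h1 : Ppoly F p = ∏ j, ((-X (p j).1) + X (p j).2) := by
    apply Finset.prod_congr rfl; intro j _; ring
  rw [h1, Finset.prod_add]
  rw [map_sum]
  rw [← Finset.powerset_univ]
  apply Finset.sum_congr rfl
  intro ε _
  have h2 : (∏ j ∈ ε, (-X (p j).1 : MvPolynomial ℕ F)) = (-1 : MvPolynomial ℕ F) ^ ε.card * ∏ j ∈ ε, X (p j).1 := by
    rw [← Finset.prod_const, ← Finset.prod_mul_distrib]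
    apply Finset.prod_congr rfl; intro j _; ring
  rw [h2, prod_X_eq, prod_X_eq, mul_assoc, monomial_mul, one_mul]
  have h3 : ((-1 : MvPolynomial ℕ F) ^ ε.card) = C ((-1 : F) ^ ε.card) := by
    simp [map_pow]
  rw [h3, C_mul_monomial, mul_one, LL_monomial]
  have h4 : (∑ j ∈ ε, Finsupp.single ((p j).1) 1 + ∑ j ∈ Finset.univ \ ε, Finsupp.single ((p j).2) 1)
      = ∑ j, Finsupp.single ((if j ∈ ε then (p j).1 else (p j).2)) (1:ℕ) := by
    rw [← Finset.sum_sdiff (Finset.subset_univ ε)]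
    rw [add_comm]
    congr 1
    · apply Finset.sum_congr rfl; intro j hj
      rw [if_neg (Finset.mem_sdiff.mp hj).2]
    · apply Finset.sum_congr rfl; intro j hj
      rw [if_pos hj]
  rw [h4, support_sum_single]
  rw [Finsupp.smul_single, smul_eq_mul, mul_one]

lemma polytabloid_eq (F : Type) [Field F] (k : ℕ) (a : ℕ → ℕ) (b : Fin k → ℕ) :
    polytabloid F k a b = LL F (Ppoly F (fun j : Fin k => (a j.val, b j))) := by
  rw [EL]; rfl

/-- The "entry function" of a matching: position+side to value. -/
def cVal {k : ℕ} (p : Fin k → ℕ × ℕ) : Fin k × Bool → ℕ :=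
  fun jb => if jb.2 then (p jb.1).2 else (p jb.1).1

def EntInj {k : ℕ} (p : Fin k → ℕ × ℕ) : Prop := Function.Injective (cVal p)
def Oriented {k : ℕ} (p : Fin k → ℕ × ℕ) : Prop := ∀ j, (p j).1 < (p j).2
def InRange (n : ℕ) {k : ℕ} (p : Fin k → ℕ × ℕ) : Prop :=
  ∀ j, (p j).1 ∈ Finset.Icc 1 n ∧ (p j).2 ∈ Finset.Icc 1 n

lemma choice_inj {k : ℕ} {p : Fin k → ℕ × ℕ} (hp : EntInj p) (ε : Finset (Fin k)) :
    Function.Injective (fun j => if j ∈ ε then (p j).1 else (p j).2) := by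
  intro j j' h
  simp only at h
  have : cVal p (j, !(decide (j ∈ ε))) = cVal p (j', !(decide (j' ∈ ε))) := by
    simp only [cVal]
    by_cases h1 : j ∈ ε <;> by_cases h2 : j' ∈ ε <;> simp_all
  exact (Prod.ext_iff.mp (hp this)).1

lemma snd_inj {k : ℕ} {p : Fin k → ℕ × ℕ} (hp : EntInj p) :
    Function.Injective (fun j => (p j).2) := by
  intro j j' h
  have : cVal p (j, true) = cVal p (j', true) := h
  exact (Prod.ext_iff.mp (hp this)).1

/-- sum over the selected set -/
lemma sum_choice {k : ℕ} {p : Fin k → ℕ × ℕ} (hp : EntInj p) (ε : Finset (Fin k)) :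
    (Finset.univ.image fun j => if j ∈ ε then (p j).1 else (p j).2).sum id
      = ∑ j, (if j ∈ ε then (p j).1 else (p j).2) := by
  rw [Finset.sum_image (fun x _ y _ h => choice_inj hp ε h)]
  simp

lemma sum_snd_set {k : ℕ} {p : Fin k → ℕ × ℕ} (hp : EntInj p) :
    (Finset.univ.image fun j => (p j).2).sum id = ∑ j, (p j).2 := by
  rw [Finset.sum_image (fun x _ y _ h => snd_inj hp h)]
  simp

lemma sum_choice_lt {k : ℕ} {p : Fin k → ℕ × ℕ} (ho : Oriented p) {ε : Finset (Fin k)}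
    (hε : ε.Nonempty) :
    (∑ j, (if j ∈ ε then (p j).1 else (p j).2)) < ∑ j, (p j).2 := by
  apply Finset.sum_lt_sum
  · intro i _
    by_cases h : i ∈ ε
    · rw [if_pos h]; exact (ho i).le
    · rw [if_neg h]
  · obtain ⟨i, hi⟩ := hε
    exact ⟨i, Finset.mem_univ i, by rw [if_pos hi]; exact ho i⟩

lemma LL_apply (F : Type) [Field F] {k : ℕ} (p : Fin k → ℕ × ℕ) (S : Finset ℕ) :
    (LL F (Ppoly F p)) S = ∑ ε : Finset (Fin k),
      (if (Finset.univ.image fun j => if j ∈ ε then (p j).1 else (p j).2) = S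
        then ((-1 : F) ^ ε.card) else 0) := by
  rw [EL, Finsupp.finset_sum_apply]
  apply Finset.sum_congr rfl
  intro ε _
  rw [Finsupp.smul_apply, Finsupp.single_apply, smul_eq_mul]
  by_cases h : (Finset.univ.image fun j => if j ∈ ε then (p j).1 else (p j).2) = S
  · rw [if_pos h, if_pos h, mul_one]
  · rw [if_neg h, if_neg h, mul_zero]

lemma lead_coeff (F : Type) [Field F] {k : ℕ} {p : Fin k → ℕ × ℕ} (hp : EntInj p)
    (ho : Oriented p) :
    (LL F (Ppoly F p)) (Finset.univ.image fun j => (p j).2) = 1 := by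
  rw [LL_apply]
  rw [Finset.sum_eq_single (∅ : Finset (Fin k))]
  · simp
  · intro ε _ hne
    rw [if_neg]
    intro hT
    have h1 := sum_choice hp ε
    rw [hT, sum_snd_set hp] at h1
    have h2 := sum_choice_lt ho (Finset.nonempty_iff_ne_empty.mpr hne)
    omega
  · intro h; exact absurd (Finset.mem_univ _) h

lemma coeff_facts (F : Type) [Field F] {n k : ℕ} {p : Fin k → ℕ × ℕ} (hp : EntInj p)
    (ho : Oriented p) (hr : InRange n p) {S : Finset ℕ} (hS : (LL F (Ppoly F p)) S ≠ 0) :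
    S.card = k ∧ S ⊆ Finset.Icc 1 n ∧
      S.sum id ≤ (Finset.univ.image fun j => (p j).2).sum id ∧
      (S.sum id = (Finset.univ.image fun j => (p j).2).sum id →
        S = Finset.univ.image fun j => (p j).2) := by
  rw [LL_apply] at hS
  obtain ⟨ε, -, hε⟩ := Finset.exists_ne_zero_of_sum_ne_zero hS
  by_cases hT : (Finset.univ.image fun j => if j ∈ ε then (p j).1 else (p j).2) = S
  swap; · rw [if_neg hT] at hε; exact absurd rfl hε
  subst hT
  refine ⟨?_, ?_, ?_, ?_⟩
  · rw [Finset.card_image_of_injective _ (choice_inj hp ε), Finset.card_univ, Fintype.card_fin]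
  · intro x hx
    obtain ⟨j, -, hj⟩ := Finset.mem_image.mp hx
    by_cases h : j ∈ ε
    · rw [if_pos h] at hj; exact hj ▸ (hr j).1
    · rw [if_neg h] at hj; exact hj ▸ (hr j).2
  · rw [sum_choice hp, sum_snd_set hp]
    apply Finset.sum_le_sum
    intro i _
    by_cases h : i ∈ ε
    · rw [if_pos h]; exact (ho i).le
    · rw [if_neg h]
  · intro hsum
    rcases Finset.eq_empty_or_nonempty ε with he | he
    · subst he; simp
    · exfalso
      rw [sum_choice hp, sum_snd_set hp] at hsum
      have := sum_choice_lt ho he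
      omega

lemma threshold_zero_iff (n : ℕ) (ω : Finset ℕ) :
    threshold n ω = 0 ↔ ∀ i, 1 ≤ i → i ≤ n / 2 + 1 → dens ω i ≠ i := by
  constructor
  · intro h i h1 h2 hd
    have hi : i ∈ (Finset.Icc 1 (n / 2 + 1)).filter fun i => dens ω i = i := by
      simp [Finset.mem_filter, Finset.mem_Icc, h1, h2, hd]
    have h2 := Finset.le_sup (f := id) hi
    rw [threshold] at h
    rw [h] at h2
    simp at h2
    omega
  · intro h
    rw [threshold]
    rw [Finset.filter_eq_empty_iff.mpr]
    · rfl
    · intro i hi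
      rw [Finset.mem_Icc] at hi
      exact h i hi.1 hi.2

lemma dens_succ_le (ω : Finset ℕ) (m : ℕ) : dens ω (m + 1) ≤ dens ω m + 2 := by
  have h1 : ω ∩ Finset.Icc 1 (2 * (m + 1) - 1) ⊆
      (ω ∩ Finset.Icc 1 (2 * m - 1)) ∪ {2 * m, 2 * m + 1} := by
    intro x hx
    rw [Finset.mem_inter, Finset.mem_Icc] at hx
    simp only [Finset.mem_union, Finset.mem_inter, Finset.mem_Icc, Finset.mem_insert,
      Finset.mem_singleton]
    by_cases hle : x ≤ 2 * m - 1
    · exact Or.inl ⟨hx.1, hx.2.1, hle⟩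
    · right; omega
  calc dens ω (m + 1) ≤ ((ω ∩ Finset.Icc 1 (2 * m - 1)) ∪ {2 * m, 2 * m + 1}).card :=
        Finset.card_le_card h1
    _ ≤ dens ω m + ({2 * m, 2 * m + 1} : Finset ℕ).card := Finset.card_union_le _ _
    _ ≤ dens ω m + 2 := by
        have : ({2 * m, 2 * m + 1} : Finset ℕ).card ≤ 2 := Finset.card_insert_le _ _ |>.trans (by simp)
        omega

lemma dens_le_card_window (ω : Finset ℕ) (i : ℕ) : dens ω i ≤ 2 * i - 1 := by
  calc dens ω i ≤ (Finset.Icc 1 (2 * i - 1)).card := Finset.card_le_card Finset.inter_subset_right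
    _ = 2 * i - 1 := by rw [Nat.card_Icc]; omega

lemma dens_intermediate (ω : Finset ℕ) : ∀ m, 1 ≤ m → m ≤ dens ω m →
    ∃ i, 1 ≤ i ∧ i ≤ m ∧ dens ω i = i := by
  intro m
  induction m with
  | zero => omega
  | succ m ih =>
      intro h1 h2
      by_cases he : dens ω (m + 1) = m + 1
      · exact ⟨m + 1, by omega, le_refl _, he⟩
      · rcases Nat.eq_zero_or_pos m with hm | hm
        · subst hm
          have := dens_le_card_window ω (0 + 1)
          omega
        · have := dens_succ_le ω m
          obtain ⟨i, hi1, hi2, hi3⟩ := ih hm (by omega)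
          exact ⟨i, hi1, by omega, hi3⟩

/-- Any oriented matching with distinct entries in `[1,n]` has second-row set of
threshold zero. -/
lemma threshold_snd_zero (n : ℕ) {k : ℕ} {p : Fin k → ℕ × ℕ} (hp : EntInj p)
    (ho : Oriented p) (hr : InRange n p) :
    threshold n (Finset.univ.image fun j => (p j).2) = 0 := by
  set ω := Finset.univ.image fun j => (p j).2 with hω
  rw [threshold_zero_iff]
  intro i h1 _ hd
  -- the i pairs with snd in the window have fsts in the window, outside ω
  set W := Finset.Icc 1 (2 * i - 1) with hW
  have hWcard : W.card = 2 * i - 1 := by rw [hW, Nat.card_Icc]; omega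
  set T := Finset.univ.filter (fun j : Fin k => (p j).2 ∈ W) with hT
  have hTcard : T.card = i := by
    have himg : T.image (fun j => (p j).2) = ω ∩ W := by
      ext x
      simp only [Finset.mem_image, Finset.mem_inter, hT, Finset.mem_filter, Finset.mem_univ,
        true_and, hω]
      constructor
      · rintro ⟨j, hj1, hj2⟩; exact ⟨⟨j, hj2⟩, hj2 ▸ hj1⟩
      · rintro ⟨⟨j, hj⟩, hx⟩; exact ⟨j, hj ▸ hx, hj⟩
    have := Finset.card_image_of_injective T (snd_inj hp)
    rw [himg] at this
    rw [← this]
    exact hd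
  -- fsts of T are i distinct elements of W \ ω
  have hsub : T.image (fun j => (p j).1) ⊆ W \ ω := by
    intro x hx
    obtain ⟨j, hj1, hj2⟩ := Finset.mem_image.mp hx
    rw [hT, Finset.mem_filter] at hj1
    rw [Finset.mem_sdiff]
    constructor
    · have h3 := ho j
      have h4 := hj1.2
      have h5 := (hr j).1
      rw [hW, Finset.mem_Icc] at h4 ⊢
      rw [Finset.mem_Icc] at h5
      omega
    · intro hmem
      rw [hω] at hmem
      obtain ⟨j', -, hj'⟩ := Finset.mem_image.mp hmem
      have : cVal p (j', true) = cVal p (j, false) := by simp [cVal, hj', hj2]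
      have := hp this
      simp at this
  have hfst : (T.image (fun j => (p j).1)).card = i := by
    rw [Finset.card_image_of_injective _ ?_, hTcard]
    intro x y h
    have : cVal p (x, false) = cVal p (y, false) := h
    exact (Prod.ext_iff.mp (hp this)).1
  have hsd : (W \ ω).card = W.card - (ω ∩ W).card := by
    rw [← Finset.sdiff_inter_self_left W ω]
    rw [Finset.card_sdiff_of_subset Finset.inter_subset_left]
    rw [Finset.inter_comm]
  have hωW : (ω ∩ W).card = i := hd
  have := Finset.card_le_card hsub
  omega

/-! ### The standard matching for a threshold-zero set -/

def stdFst (n : ℕ) (ω : Finset ℕ) : ℕ → ℕ :=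
  fun i => ((Finset.Icc 1 n \ ω).sort (· ≤ ·)).getD i 0
def stdSnd (ω : Finset ℕ) : ℕ → ℕ := fun i => (ω.sort (· ≤ ·)).getD i 0
def stdP (n k : ℕ) (ω : Finset ℕ) : Fin k → ℕ × ℕ :=
  fun j => (stdFst n ω j.val, stdSnd ω j.val)

lemma getD_sort_eq_orderEmbOfFin {s : Finset ℕ} {m : ℕ} (h : s.card = m) (j : Fin m) :
    (s.sort (· ≤ ·)).getD j.val 0 = s.orderEmbOfFin h j := by
  have hlen : (s.sort (· ≤ ·)).length = m := by rw [Finset.length_sort, h]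
  have hj : j.val < (s.sort (· ≤ ·)).length := by rw [hlen]; exact j.isLt
  have hf : (fun i : Fin m => (s.sort (· ≤ ·)).get (Fin.cast hlen.symm i))
      = ⇑(s.orderEmbOfFin h) := by
    apply Finset.orderEmbOfFin_unique h
    · intro i
      rw [← Finset.mem_sort (α := ℕ) (· ≤ ·)]
      apply List.get_mem
    · intro i i' hii'
      exact (s.sortedLT_sort).strictMono_get (by simpa using hii')
  rw [List.getD_eq_get _ 0 ⟨j.val, hj⟩]
  have := congrFun hf j
  simpa using this

lemma comp_card {n k : ℕ} {ω : Finset ℕ} (hsub : ω ⊆ Finset.Icc 1 n) (hcard : ω.card = k)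
    (hkn : k ≤ n) : (Finset.Icc 1 n \ ω).card = n - k := by
  rw [Finset.card_sdiff_of_subset hsub, Nat.card_Icc, hcard]
  omega

/-- generic: number of elements of `s` below a bound `≤ (j+1)`-th element is `≤ j` -/
lemma filter_lt_emb_card {s : Finset ℕ} {m : ℕ} (h : s.card = m) (t : ℕ) (j : Fin m)
    (ht : t ≤ s.orderEmbOfFin h j) : (s.filter (· < t)).card ≤ j.val := by
  have hsub : s.filter (· < t) ⊆ (Finset.Iio j).image (s.orderEmbOfFin h) := by
    intro z hz
    rw [Finset.mem_filter] at hz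
    have : z ∈ Set.range (s.orderEmbOfFin h) := by
      rw [Finset.range_orderEmbOfFin]; exact hz.1
    obtain ⟨i, hi⟩ := this
    rw [Finset.mem_image]
    refine ⟨i, ?_, hi⟩
    rw [Finset.mem_Iio]
    have : (s.orderEmbOfFin h) i < (s.orderEmbOfFin h) j := by omega
    exact (OrderEmbedding.lt_iff_lt _).mp this
  calc (s.filter (· < t)).card ≤ _ := Finset.card_le_card hsub
    _ ≤ (Finset.Iio j).card := Finset.card_image_le
    _ = j.val := Fin.card_Iio j

/-- The elements of a threshold-zero set are large: `y_j ≥ 2j+2` (0-indexed). -/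
lemma snd_lower {n k : ℕ} {ω : Finset ℕ} (hsub0 : ω ⊆ Finset.Icc 1 n) (hcard : ω.card = k)
    (h2k : 2 * k ≤ n) (ht : threshold n ω = 0) (j : Fin k) :
    2 * j.val + 2 ≤ ω.orderEmbOfFin hcard j := by
  by_contra hc
  push_neg at hc
  -- then dens ω (j+1) ≥ j+1
  have hdens : j.val + 1 ≤ dens ω (j.val + 1) := by
    have hsub : (Finset.Iic j).image (ω.orderEmbOfFin hcard) ⊆
        ω ∩ Finset.Icc 1 (2 * (j.val + 1) - 1) := by
      intro z hz
      obtain ⟨i, hi1, hi2⟩ := Finset.mem_image.mp hz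
      rw [Finset.mem_Iic] at hi1
      rw [Finset.mem_inter, Finset.mem_Icc]
      have hmem : z ∈ ω := hi2 ▸ Finset.orderEmbOfFin_mem ω hcard i
      have hle : (ω.orderEmbOfFin hcard) i ≤ (ω.orderEmbOfFin hcard) j :=
        (OrderEmbedding.le_iff_le _).mpr hi1
      have hpos : 1 ≤ z := (Finset.mem_Icc.mp (hsub0 hmem)).1
      constructor
      · exact hmem
      · exact ⟨hpos, by omega⟩
    have hcard2 : ((Finset.Iic j).image (ω.orderEmbOfFin hcard)).card = j.val + 1 := by
      rw [Finset.card_image_of_injective _ (ω.orderEmbOfFin hcard).injective, Fin.card_Iic]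
    have := Finset.card_le_card hsub
    rw [hcard2] at this
    exact this
  obtain ⟨i, hi1, hi2, hi3⟩ := dens_intermediate ω (j.val + 1) (by omega) hdens
  rw [threshold_zero_iff] at ht
  have hjk : j.val + 1 ≤ k := j.isLt
  have : i ≤ n / 2 + 1 := by
    have : k ≤ n / 2 := Nat.le_div_iff_mul_le (by norm_num) |>.mpr (by omega)
    omega
  exact ht i hi1 this hi3


lemma stdSnd_eq {k : ℕ} {ω : Finset ℕ} (hcard : ω.card = k) (j : Fin k) :
    stdSnd ω j.val = ω.orderEmbOfFin hcard j :=
  getD_sort_eq_orderEmbOfFin hcard j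

lemma stdFst_eq {n k : ℕ} {ω : Finset ℕ} (hsub : ω ⊆ Finset.Icc 1 n) (hcard : ω.card = k)
    (hkn : k ≤ n) (i : Fin (n - k)) :
    stdFst n ω i.val = (Finset.Icc 1 n \ ω).orderEmbOfFin (comp_card hsub hcard hkn) i :=
  getD_sort_eq_orderEmbOfFin _ i

lemma std_oriented {n k : ℕ} {ω : Finset ℕ} (hsub : ω ⊆ Finset.Icc 1 n) (hcard : ω.card = k)
    (h2k : 2 * k ≤ n) (ht : threshold n ω = 0) (j : Fin k) :
    stdFst n ω j.val < stdSnd ω j.val := by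
  have hkn : k ≤ n := by omega
  have hjnk : j.val < n - k := by have := j.isLt; omega
  rw [stdSnd_eq hcard j, stdFst_eq hsub hcard hkn ⟨j.val, hjnk⟩]
  set C := Finset.Icc 1 n \ ω with hC
  set hc := comp_card hsub hcard hkn
  set y := ω.orderEmbOfFin hcard j with hy
  by_contra hcon
  push_neg at hcon
  have hysmall : 2 * j.val + 2 ≤ y := snd_lower hsub hcard h2k ht j
  have hyn : y ≤ n := (Finset.mem_Icc.mp (hsub (Finset.orderEmbOfFin_mem ω hcard j))).2
  have hIccsub : Finset.Icc 1 (y - 1) ⊆ (ω.filter (· < y)) ∪ (C.filter (· < y)) := by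
    intro z hz
    rw [Finset.mem_Icc] at hz
    have hzn : z ∈ Finset.Icc 1 n := Finset.mem_Icc.mpr ⟨hz.1, by omega⟩
    rw [Finset.mem_union, Finset.mem_filter, Finset.mem_filter]
    by_cases hzo : z ∈ ω
    · exact Or.inl ⟨hzo, by omega⟩
    · exact Or.inr ⟨Finset.mem_sdiff.mpr ⟨hzn, hzo⟩, by omega⟩
  have h1 : (ω.filter (· < y)).card ≤ j.val := filter_lt_emb_card hcard y j (le_refl _)
  have h2 : (C.filter (· < y)).card ≤ j.val :=
    filter_lt_emb_card hc y ⟨j.val, hjnk⟩ hcon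
  have h3 : (Finset.Icc 1 (y - 1)).card = y - 1 := by rw [Nat.card_Icc]; omega
  have h4 := Finset.card_le_card hIccsub
  have h5 := Finset.card_union_le (ω.filter (· < y)) (C.filter (· < y))
  omega

lemma stdFst_mem {n k : ℕ} {ω : Finset ℕ} (hsub : ω ⊆ Finset.Icc 1 n) (hcard : ω.card = k)
    (h2k : 2 * k ≤ n) (j : Fin k) : stdFst n ω j.val ∈ Finset.Icc 1 n \ ω := by
  have hkn : k ≤ n := by omega
  have hj : j.val < n - k := by have := j.isLt; omega
  rw [stdFst_eq hsub hcard hkn ⟨j.val, hj⟩]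
  exact Finset.orderEmbOfFin_mem _ _ _

lemma stdSnd_mem {k : ℕ} {ω : Finset ℕ} (hcard : ω.card = k) (j : Fin k) :
    stdSnd ω j.val ∈ ω := by
  rw [stdSnd_eq hcard j]
  exact Finset.orderEmbOfFin_mem _ _ _

lemma stdP_entInj {n k : ℕ} {ω : Finset ℕ} (hsub : ω ⊆ Finset.Icc 1 n) (hcard : ω.card = k)
    (h2k : 2 * k ≤ n) : EntInj (stdP n k ω) := by
  have hkn : k ≤ n := by omega
  have hsndinj : ∀ i i' : Fin k, stdSnd ω i.val = stdSnd ω i'.val → i = i' := by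
    intro i i' h
    rw [stdSnd_eq hcard i, stdSnd_eq hcard i'] at h
    exact (ω.orderEmbOfFin hcard).injective h
  have hfstinj : ∀ i i' : Fin k, stdFst n ω i.val = stdFst n ω i'.val → i = i' := by
    intro i i' h
    have hi : i.val < n - k := by have := i.isLt; omega
    have hi' : i'.val < n - k := by have := i'.isLt; omega
    rw [stdFst_eq hsub hcard hkn ⟨i.val, hi⟩, stdFst_eq hsub hcard hkn ⟨i'.val, hi'⟩] at h
    have h2 := (Finset.orderEmbOfFin _ _).injective h
    have h3 : i.val = i'.val := by injection h2
    exact Fin.ext h3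
  have hmix : ∀ i i' : Fin k, stdSnd ω i.val ≠ stdFst n ω i'.val := by
    intro i i' he
    have h1 := stdSnd_mem hcard i
    have h2 := stdFst_mem hsub hcard h2k i'
    rw [← he] at h2
    exact (Finset.mem_sdiff.mp h2).2 h1
  intro ⟨j, b⟩ ⟨j', b'⟩ h
  simp only [cVal, stdP] at h
  match b, b' with
  | true, true =>
      simp at h
      rw [hsndinj j j' h]
  | true, false =>
      simp at h
      exact absurd h (hmix j j')
  | false, true =>
      simp at h
      exact absurd h.symm (hmix j' j)
  | false, false =>
      simp at h
      rw [hfstinj j j' h]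

lemma stdP_inRange {n k : ℕ} {ω : Finset ℕ} (hsub : ω ⊆ Finset.Icc 1 n) (hcard : ω.card = k)
    (h2k : 2 * k ≤ n) : InRange n (stdP n k ω) := by
  intro j
  constructor
  · exact (Finset.mem_sdiff.mp (stdFst_mem hsub hcard h2k j)).1
  · exact hsub (stdSnd_mem hcard j)

lemma stdP_sndImage {n k : ℕ} {ω : Finset ℕ} (hcard : ω.card = k) :
    (Finset.univ.image fun j => (stdP n k ω j).2) = ω := by
  apply Finset.eq_of_subset_of_card_le
  · intro x hx
    obtain ⟨j, -, hj⟩ := Finset.mem_image.mp hx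
    exact hj ▸ stdSnd_mem hcard j
  · rw [Finset.card_image_of_injective _ ?hinj, Finset.card_univ, Fintype.card_fin, hcard]
    case hinj =>
      intro x y h
      simp only [stdP] at h
      rw [stdSnd_eq hcard x, stdSnd_eq hcard y] at h
      exact (ω.orderEmbOfFin hcard).injective h

/-! ### Helpers for the straightening rewriting -/

lemma inj_update_fresh {α : Type} [DecidableEq α] {f : α → ℕ} (hf : Function.Injective f)
    {z : ℕ} (hz : ∀ x, f x ≠ z) (a : α) : Function.Injective (Function.update f a z) := by
  intro x y h
  by_cases hx : x = a <;> by_cases hy : y = a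
  · rw [hx, hy]
  · subst hx
    rw [Function.update_self, Function.update_of_ne hy] at h
    exact absurd h.symm (hz y)
  · subst hy
    rw [Function.update_self, Function.update_of_ne hx] at h
    exact absurd h (hz x)
  · rw [Function.update_of_ne hx, Function.update_of_ne hy] at h
    exact hf h

lemma sum_update_one {k : ℕ} (s : Fin k → ℕ) (i : Fin k) (u : ℕ) :
    (∑ j, Function.update s i u j) + s i = (∑ j, s j) + u := by
  rw [Finset.sum_update_of_mem (Finset.mem_univ i)]
  rw [← Finset.sum_erase_add Finset.univ s (Finset.mem_univ i)]
  have : Finset.univ \ {i} = Finset.univ.erase i := by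
    rw [Finset.erase_eq]
  rw [this]
  ring

lemma sum_update_two {k : ℕ} (s : Fin k → ℕ) {i i' : Fin k} (hne : i ≠ i') (u v : ℕ) :
    (∑ j, Function.update (Function.update s i u) i' v j) + s i + s i'
      = (∑ j, s j) + u + v := by
  have h1 := sum_update_one (Function.update s i u) i' v
  have h2 := sum_update_one s i u
  rw [Function.update_of_ne (Ne.symm hne)] at h1
  omega

/-- Splitting a matching product into one factor and the rest. -/
lemma Ppoly_factor (F : Type) [Field F] {k : ℕ} (p : Fin k → ℕ × ℕ) (i : Fin k) :
    Ppoly F p = (X (p i).2 - X (p i).1) * ∏ j ∈ Finset.univ.erase i, (X (p j).2 - X (p j).1) :=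
  (Finset.mul_prod_erase _ _ (Finset.mem_univ i)).symm

lemma Ppoly_factor_two (F : Type) [Field F] {k : ℕ} (p : Fin k → ℕ × ℕ) {i i' : Fin k}
    (hne : i ≠ i') :
    Ppoly F p = (X (p i).2 - X (p i).1) * ((X (p i').2 - X (p i').1) *
      ∏ j ∈ (Finset.univ.erase i).erase i', (X (p j).2 - X (p j).1)) := by
  rw [Ppoly_factor F p i]
  congr 1
  exact (Finset.mul_prod_erase _ _ (Finset.mem_erase.mpr ⟨Ne.symm hne, Finset.mem_univ i'⟩)).symm

lemma prod_erase_update (F : Type) [Field F] {k : ℕ} (p : Fin k → ℕ × ℕ) (i : Fin k)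
    (w : ℕ × ℕ) :
    (∏ j ∈ Finset.univ.erase i, (X ((Function.update p i w) j).2
        - X ((Function.update p i w) j).1 : MvPolynomial ℕ F))
      = ∏ j ∈ Finset.univ.erase i, (X (p j).2 - X (p j).1) := by
  apply Finset.prod_congr rfl
  intro j hj
  rw [Function.update_of_ne (Finset.ne_of_mem_erase hj)]

lemma fin_strictMono_le' {k : ℕ} (f : Fin k → ℕ) (hf : StrictMono f) :
    ∀ v (hv : v < k), v ≤ f ⟨v, hv⟩ := by
  intro v
  induction v with
  | zero => intro hv; exact Nat.zero_le _
  | succ m ih =>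
      intro hv
      have hm : m < k := by omega
      have h1 := ih hm
      have h2 : f ⟨m, hm⟩ < f ⟨m + 1, hv⟩ := hf (by simp [Fin.lt_def])
      omega

lemma fin_strictMono_le {k : ℕ} (f : Fin k → ℕ) (hf : StrictMono f) (j : Fin k) :
    j.val ≤ f j := by
  have := fin_strictMono_le' f hf j.val j.isLt
  simpa using this

/-- measure components -/
def M1 {k : ℕ} (p : Fin k → ℕ × ℕ) : ℕ := ∑ j, (p j).2
def M2 {k : ℕ} (p : Fin k → ℕ × ℕ) : ℕ := ∑ j, (p j).1
def MXY {k : ℕ} (p : Fin k → ℕ × ℕ) : ℕ := ∑ j, (p j).1 * (p j).2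
def M3 (n : ℕ) {k : ℕ} (p : Fin k → ℕ × ℕ) : ℕ := k * n * n + 1 - MXY p
def Bd1 (n k : ℕ) : ℕ := k * n + 1
def Bd2 (n k : ℕ) : ℕ := k * n * n + 2
def μm (n : ℕ) {k : ℕ} (p : Fin k → ℕ × ℕ) : ℕ :=
  M1 p * (Bd1 n k * Bd2 n k) + M2 p * Bd2 n k + M3 n p

lemma M1_bound {n k : ℕ} {p : Fin k → ℕ × ℕ} (hr : InRange n p) : M1 p ≤ k * n := by
  calc M1 p ≤ ∑ _j : Fin k, n := Finset.sum_le_sum (fun j _ => (Finset.mem_Icc.mp (hr j).2).2)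
    _ = k * n := by rw [Finset.sum_const, Finset.card_univ, Fintype.card_fin, smul_eq_mul]

lemma M2_bound {n k : ℕ} {p : Fin k → ℕ × ℕ} (hr : InRange n p) : M2 p ≤ k * n := by
  calc M2 p ≤ ∑ _j : Fin k, n := Finset.sum_le_sum (fun j _ => (Finset.mem_Icc.mp (hr j).1).2)
    _ = k * n := by rw [Finset.sum_const, Finset.card_univ, Fintype.card_fin, smul_eq_mul]

lemma MXY_bound {n k : ℕ} {p : Fin k → ℕ × ℕ} (hr : InRange n p) : MXY p ≤ k * n * n := by
  calc MXY p ≤ ∑ _j : Fin k, n * n := by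
        apply Finset.sum_le_sum
        intro j _
        exact Nat.mul_le_mul (Finset.mem_Icc.mp (hr j).1).2 (Finset.mem_Icc.mp (hr j).2).2
    _ = k * (n * n) := by rw [Finset.sum_const, Finset.card_univ, Fintype.card_fin, smul_eq_mul]
    _ = k * n * n := by ring

lemma mu_lt {n k : ℕ} {p q : Fin k → ℕ × ℕ} (hrp : InRange n p) (hrq : InRange n q)
    (h : M1 q < M1 p ∨ (M1 q = M1 p ∧ (M2 q < M2 p ∨ (M2 q = M2 p ∧ MXY p < MXY q)))) :
    μm n q < μm n p := by
  have b1p := M1_bound hrp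
  have b2p := M2_bound hrp
  have b3p := MXY_bound hrp
  have b1q := M1_bound hrq
  have b2q := M2_bound hrq
  have b3q := MXY_bound hrq
  have hB1 : M2 q < Bd1 n k := by rw [Bd1]; omega
  have hB2 : M3 n q < Bd2 n k ∧ M3 n p < Bd2 n k := by
    constructor <;> (rw [M3, Bd2]; omega)
  rcases h with h | ⟨he1, h⟩
  · rw [μm, μm]
    calc M1 q * (Bd1 n k * Bd2 n k) + M2 q * Bd2 n k + M3 n q
        < M1 q * (Bd1 n k * Bd2 n k) + Bd1 n k * Bd2 n k := by
          have : M2 q * Bd2 n k + M3 n q < Bd1 n k * Bd2 n k := by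
            have : M2 q * Bd2 n k + Bd2 n k ≤ Bd1 n k * Bd2 n k := by
              have : (M2 q + 1) * Bd2 n k ≤ Bd1 n k * Bd2 n k :=
                Nat.mul_le_mul_right _ (by omega)
              calc M2 q * Bd2 n k + Bd2 n k = (M2 q + 1) * Bd2 n k := by ring
                _ ≤ _ := this
            omega
          omega
      _ = (M1 q + 1) * (Bd1 n k * Bd2 n k) := by ring
      _ ≤ M1 p * (Bd1 n k * Bd2 n k) := Nat.mul_le_mul_right _ (by omega)
      _ ≤ _ := by omega
  rcases h with h | ⟨he2, h⟩
  · rw [μm, μm, he1]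
    have : M2 q * Bd2 n k + M3 n q < M2 p * Bd2 n k := by
      calc M2 q * Bd2 n k + M3 n q < M2 q * Bd2 n k + Bd2 n k := by omega
        _ = (M2 q + 1) * Bd2 n k := by ring
        _ ≤ M2 p * Bd2 n k := Nat.mul_le_mul_right _ (by omega)
    omega
  · rw [μm, μm, he1, he2]
    have : M3 n q < M3 n p := by rw [M3, M3]; omega
    omega

def SstdGen (F : Type) [Field F] (n k : ℕ) : Set (MvPolynomial ℕ F) :=
  {q | ∃ ω : Finset ℕ, ω ⊆ Finset.Icc 1 n ∧ ω.card = k ∧ threshold n ω = 0 ∧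
    q = Ppoly F (stdP n k ω)}

lemma entInj_of_comp {k : ℕ} {q q' : Fin k → ℕ × ℕ} (e : (Fin k × Bool) ≃ (Fin k × Bool))
    (h : cVal q' = cVal q ∘ e) (hq : EntInj q) : EntInj q' := by
  rw [EntInj, h]
  exact hq.comp e.injective

theorem straighten (F : Type) [Field F] (n k : ℕ) (h2k : 2 * k ≤ n) :
    ∀ (N : ℕ) (p : Fin k → ℕ × ℕ), μm n p ≤ N → EntInj p → Oriented p → InRange n p →
      Ppoly F p ∈ Submodule.span F (SstdGen F n k) := by
  intro N
  induction N using Nat.strong_induction_on with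
  | _ N ih =>
  intro p hN hinj hor hr
  classical
  set σ := Tuple.sort (fun j => (p j).2) with hσ
  set q : Fin k → ℕ × ℕ := p ∘ σ with hqdef
  have hPq : Ppoly F q = Ppoly F p := Equiv.prod_comp σ (fun j => X (p j).2 - X (p j).1)
  have hinjq : EntInj q := by
    apply entInj_of_comp (Equiv.prodCongr σ (Equiv.refl Bool)) ?_ hinj
    funext jb
    obtain ⟨j, b⟩ := jb
    rfl
  have horq : Oriented q := fun j => hor (σ j)
  have hrq : InRange n q := fun j => hr (σ j)
  have hμq : μm n q = μm n p := by
    rw [μm, μm, M1, M1, M2, M2, M3, M3, MXY, MXY]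
    simp only [hqdef, Function.comp_apply]
    rw [Equiv.sum_comp σ (fun j => (p j).2), Equiv.sum_comp σ (fun j => (p j).1),
      Equiv.sum_comp σ (fun j => (p j).1 * (p j).2)]
  have hmono : Monotone (fun j => (q j).2) := Tuple.monotone_sort (fun j => (p j).2)
  rw [← hPq]
  have hNq : μm n q ≤ N := hμq ▸ hN
  clear hPq hμq hN hinj hor hr hσ
  by_cases hz : ∃ z, z ∈ Finset.Icc 1 n ∧ (∀ jb, cVal q jb ≠ z) ∧ ∃ j, z < (q j).1
  · -- Rule (i)
    obtain ⟨z, hzIcc, hzfresh, j, hzlt⟩ := hz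
    have hxy : (q j).1 < (q j).2 := horq j
    set x := (q j).1 with hx
    set y := (q j).2 with hy
    set q1 := Function.update q j (z, y) with hq1
    set q2 := Function.update q j (z, x) with hq2
    have hid : Ppoly F q = Ppoly F q1 - Ppoly F q2 := by
      rw [Ppoly_factor F q j, Ppoly_factor F q1 j, Ppoly_factor F q2 j, hq1, hq2,
        prod_erase_update, prod_erase_update]
      simp only [Function.update_self]
      ring
    -- q1 properties
    have hq1snd : ∀ j', (q1 j').2 = (q j').2 := by
      intro j'
      by_cases h : j' = j
      · subst h; rw [hq1, Function.update_self]
      · rw [hq1, Function.update_of_ne h]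
    have hq1fst : (fun j' => (q1 j').1) = Function.update (fun j' => (q j').1) j z := by
      funext j'
      by_cases h : j' = j
      · subst h; rw [hq1, Function.update_self, Function.update_self]
      · rw [hq1, Function.update_of_ne h, Function.update_of_ne h]
    have hinj1 : EntInj q1 := by
      have : cVal q1 = Function.update (cVal q) (j, false) z := by
        funext jb
        obtain ⟨j', b⟩ := jb
        by_cases h : j' = j
        · subst h
          cases b
          · rw [Function.update_self]
            show (q1 j').1 = z
            rw [hq1, Function.update_self]
          · rw [Function.update_of_ne (by simp)]
            show (q1 j').2 = cVal q (j', true)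
            rw [hq1snd]; rfl
        · rw [Function.update_of_ne (by simp [h])]
          show cVal q1 (j', b) = cVal q (j', b)
          cases b
          · show (q1 j').1 = (q j').1
            rw [hq1, Function.update_of_ne h]
          · show (q1 j').2 = (q j').2
            exact hq1snd j'
      rw [EntInj, this]
      exact inj_update_fresh hinjq hzfresh _
    have hor1 : Oriented q1 := by
      intro j'
      by_cases h : j' = j
      · subst h; rw [hq1, Function.update_self]; show z < y; omega
      · rw [hq1, Function.update_of_ne h]; exact horq j'
    have hr1 : InRange n q1 := by
      intro j'
      by_cases h : j' = j
      · subst h; rw [hq1, Function.update_self]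
        exact ⟨hzIcc, (hrq j').2⟩
      · rw [hq1, Function.update_of_ne h]; exact hrq j'
    have hμ1 : μm n q1 < μm n q := by
      apply mu_lt hrq hr1
      right
      constructor
      · rw [M1, M1]; exact Finset.sum_congr rfl (fun j' _ => hq1snd j')
      · left
        have h1 : M2 q1 + (q j).1 = M2 q + z := by
          rw [M2, M2, hq1fst]
          exact sum_update_one _ j z
        omega
    -- q2 properties
    have hq2snd : (fun j' => (q2 j').2) = Function.update (fun j' => (q j').2) j x := by
      funext j'
      by_cases h : j' = j
      · subst h; rw [hq2, Function.update_self, Function.update_self]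
      · rw [hq2, Function.update_of_ne h, Function.update_of_ne h]
    have hinj2 : EntInj q2 := by
      have : cVal q2 = Function.update (cVal q ∘ (Equiv.swap (j, false) (j, true)))
          (j, false) z := by
        funext jb
        obtain ⟨j', b⟩ := jb
        by_cases h : j' = j
        · subst h
          cases b
          · rw [Function.update_self]
            show (q2 j').1 = z
            rw [hq2, Function.update_self]
          · rw [Function.update_of_ne (by simp)]
            show (q2 j').2 = cVal q ((Equiv.swap ((j' : Fin k), false) (j', true)) (j', true))
            rw [Equiv.swap_apply_right]
            show (q2 j').2 = (q j').1
            rw [hq2, Function.update_self]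
        · rw [Function.update_of_ne (by simp [h])]
          have hsw : (Equiv.swap ((j : Fin k), false) (j, true)) (j', b) = (j', b) :=
            Equiv.swap_apply_of_ne_of_ne (by simp [h]) (by simp [h])
          show cVal q2 (j', b) = cVal q ((Equiv.swap ((j : Fin k), false) (j, true)) (j', b))
          rw [hsw]
          show cVal q2 (j', b) = cVal q (j', b)
          rw [cVal, cVal]
          simp only
          rw [hq2, Function.update_of_ne h]
      rw [EntInj, this]
      apply inj_update_fresh (hinjq.comp (Equiv.swap _ _).injective)
      intro xx
      exact hzfresh _
    have hor2 : Oriented q2 := by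
      intro j'
      by_cases h : j' = j
      · subst h; rw [hq2, Function.update_self]; show z < x; omega
      · rw [hq2, Function.update_of_ne h]; exact horq j'
    have hr2 : InRange n q2 := by
      intro j'
      by_cases h : j' = j
      · subst h; rw [hq2, Function.update_self]
        exact ⟨hzIcc, (hrq j').1⟩
      · rw [hq2, Function.update_of_ne h]; exact hrq j'
    have hμ2 : μm n q2 < μm n q := by
      apply mu_lt hrq hr2
      left
      have h1 : M1 q2 + (q j).2 = M1 q + x := by
        rw [M1, M1, hq2snd]
        exact sum_update_one _ j x
      omega
    rw [hid]
    exact sub_mem (ih (μm n q1) (by omega) q1 (le_refl _) hinj1 hor1 hr1)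
      (ih (μm n q2) (by omega) q2 (le_refl _) hinj2 hor2 hr2)
  · -- no rule (i) applicable
    by_cases hinv : ∃ i i', (q i).1 < (q i').1 ∧ (q i').2 < (q i).2
    · -- Rule (ii)
      obtain ⟨i, i', hab, hcd⟩ := hinv
      have hne : i ≠ i' := by
        rintro rfl
        exact lt_irrefl _ hab
      have hbc : (q i').1 < (q i').2 := horq i'
      set a := (q i).1 with ha
      set d := (q i).2 with hd
      set b := (q i').1 with hb
      set c := (q i').2 with hc
      set q1 := Function.update (Function.update q i (a, c)) i' (b, d) with hq1
      set q2 := Function.update (Function.update q i (a, b)) i' (c, d) with hq2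
      have hq1i : q1 i = (a, c) := by
        rw [hq1, Function.update_of_ne hne, Function.update_self]
      have hq1i' : q1 i' = (b, d) := by
        rw [hq1, Function.update_self]
      have hq2i : q2 i = (a, b) := by
        rw [hq2, Function.update_of_ne hne, Function.update_self]
      have hq2i' : q2 i' = (c, d) := by
        rw [hq2, Function.update_self]
      have hq1o : ∀ j, j ≠ i → j ≠ i' → q1 j = q j := by
        intro j hji hji'
        rw [hq1, Function.update_of_ne hji', Function.update_of_ne hji]
      have hq2o : ∀ j, j ≠ i → j ≠ i' → q2 j = q j := by
        intro j hji hji'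
        rw [hq2, Function.update_of_ne hji', Function.update_of_ne hji]
      have hid : Ppoly F q = Ppoly F q1 - Ppoly F q2 := by
        rw [Ppoly_factor_two F q hne, Ppoly_factor_two F q1 hne, Ppoly_factor_two F q2 hne]
        have hR1 : (∏ j ∈ (Finset.univ.erase i).erase i', (X (q1 j).2 - X (q1 j).1
            : MvPolynomial ℕ F)) = ∏ j ∈ (Finset.univ.erase i).erase i',
              (X (q j).2 - X (q j).1) := by
          apply Finset.prod_congr rfl
          intro j hj
          rw [Finset.mem_erase, Finset.mem_erase] at hj
          rw [hq1o j hj.2.1 hj.1]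
        have hR2 : (∏ j ∈ (Finset.univ.erase i).erase i', (X (q2 j).2 - X (q2 j).1
            : MvPolynomial ℕ F)) = ∏ j ∈ (Finset.univ.erase i).erase i',
              (X (q j).2 - X (q j).1) := by
          apply Finset.prod_congr rfl
          intro j hj
          rw [Finset.mem_erase, Finset.mem_erase] at hj
          rw [hq2o j hj.2.1 hj.1]
        rw [hR1, hR2, hq1i, hq1i', hq2i, hq2i']
        ring
      -- injectivity
      have hinj1 : EntInj q1 := by
        apply entInj_of_comp (Equiv.swap ((i : Fin k), true) (i', true)) ?_ hinjq
        funext jb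
        obtain ⟨j, bb⟩ := jb
        by_cases hji : j = i
        · subst hji
          cases bb
          · show (q1 j).1 = cVal q ((Equiv.swap ((j : Fin k), true) (i', true)) (j, false))
            rw [Equiv.swap_apply_of_ne_of_ne (by simp) (by simp [hne])]
            rw [hq1i]
            rfl
          · show (q1 j).2 = cVal q ((Equiv.swap ((j : Fin k), true) (i', true)) (j, true))
            rw [Equiv.swap_apply_left, hq1i]
            rfl
        · by_cases hji' : j = i'
          · subst hji'
            cases bb
            · show (q1 j).1 = cVal q ((Equiv.swap ((i : Fin k), true) (j, true)) (j, false))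
              rw [Equiv.swap_apply_of_ne_of_ne (by simp [Ne.symm hji]) (by simp)]
              rw [hq1i']
              rfl
            · show (q1 j).2 = cVal q ((Equiv.swap ((i : Fin k), true) (j, true)) (j, true))
              rw [Equiv.swap_apply_right, hq1i']
              rfl
          · show cVal q1 (j, bb) = cVal q ((Equiv.swap ((i : Fin k), true) (i', true)) (j, bb))
            rw [Equiv.swap_apply_of_ne_of_ne (by simp [hji]) (by simp [hji'])]
            show cVal q1 (j, bb) = cVal q (j, bb)
            simp [cVal, hq1o j hji hji']
      have hinj2 : EntInj q2 := by
        apply entInj_of_comp ((Equiv.swap ((i : Fin k), true) (i', false)).trans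
          (Equiv.swap ((i : Fin k), true) (i', true))) ?_ hinjq
        funext jb
        obtain ⟨j, bb⟩ := jb
        simp only [Function.comp_apply, Equiv.trans_apply]
        by_cases hji : j = i
        · subst hji
          cases bb
          · have h1 : (Equiv.swap ((j : Fin k), true) (i', false)) (j, false) = (j, false) :=
              Equiv.swap_apply_of_ne_of_ne (by simp) (by simp [hne])
            have h2 : (Equiv.swap ((j : Fin k), true) (i', true)) (j, false) = (j, false) :=
              Equiv.swap_apply_of_ne_of_ne (by simp) (by simp [hne])
            rw [h1, h2]
            show (q2 j).1 = cVal q (j, false)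
            rw [hq2i]
            rfl
          · have h1 : (Equiv.swap ((j : Fin k), true) (i', false)) (j, true) = (i', false) :=
              Equiv.swap_apply_left _ _
            have h2 : (Equiv.swap ((j : Fin k), true) (i', true)) (i', false) = (i', false) :=
              Equiv.swap_apply_of_ne_of_ne (by simp [Ne.symm hne]) (by simp)
            rw [h1, h2]
            show (q2 j).2 = cVal q (i', false)
            rw [hq2i]
            rfl
        · by_cases hji' : j = i'
          · subst hji'
            cases bb
            · have h1 : (Equiv.swap ((i : Fin k), true) (j, false)) (j, false) = (i, true) :=
                Equiv.swap_apply_right _ _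
              have h2 : (Equiv.swap ((i : Fin k), true) (j, true)) (i, true) = (j, true) :=
                Equiv.swap_apply_left _ _
              rw [h1, h2]
              show (q2 j).1 = cVal q (j, true)
              rw [hq2i']
              rfl
            · have h1 : (Equiv.swap ((i : Fin k), true) (j, false)) (j, true) = (j, true) :=
                Equiv.swap_apply_of_ne_of_ne (by simp [hji]) (by simp)
              have h2 : (Equiv.swap ((i : Fin k), true) (j, true)) (j, true) = (i, true) :=
                Equiv.swap_apply_right _ _
              rw [h1, h2]
              show (q2 j).2 = cVal q (i, true)
              rw [hq2i']
              rfl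
          · have h1 : (Equiv.swap ((i : Fin k), true) (i', false)) (j, bb) = (j, bb) :=
              Equiv.swap_apply_of_ne_of_ne (by simp [hji]) (by simp [hji'])
            have h2 : (Equiv.swap ((i : Fin k), true) (i', true)) (j, bb) = (j, bb) :=
              Equiv.swap_apply_of_ne_of_ne (by simp [hji]) (by simp [hji'])
            rw [h1, h2]
            show cVal q2 (j, bb) = cVal q (j, bb)
            simp [cVal, hq2o j hji hji']
      -- orientation
      have hor1 : Oriented q1 := by
        intro j
        by_cases hji : j = i
        · subst hji; rw [hq1i]; show a < c; omega
        · by_cases hji' : j = i'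
          · subst hji'; rw [hq1i']; show b < d; omega
          · rw [hq1o j hji hji']; exact horq j
      have hor2 : Oriented q2 := by
        intro j
        by_cases hji : j = i
        · subst hji; rw [hq2i]; show a < b; omega
        · by_cases hji' : j = i'
          · subst hji'; rw [hq2i']; show c < d; omega
          · rw [hq2o j hji hji']; exact horq j
      -- ranges
      have hr1 : InRange n q1 := by
        intro j
        by_cases hji : j = i
        · subst hji; rw [hq1i]; exact ⟨(hrq j).1, (hrq i').2⟩
        · by_cases hji' : j = i'
          · subst hji'; rw [hq1i']; exact ⟨(hrq j).1, (hrq i).2⟩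
          · rw [hq1o j hji hji']; exact hrq j
      have hr2 : InRange n q2 := by
        intro j
        by_cases hji : j = i
        · subst hji; rw [hq2i]; exact ⟨(hrq j).1, (hrq i').1⟩
        · by_cases hji' : j = i'
          · subst hji'; rw [hq2i']; exact ⟨(hrq j).2, (hrq i).2⟩
          · rw [hq2o j hji hji']; exact hrq j
      -- measures
      have hμ1 : μm n q1 < μm n q := by
        apply mu_lt hrq hr1
        right
        refine ⟨?_, Or.inr ⟨?_, ?_⟩⟩
        · have e1 : (fun j => (q1 j).2) = Function.update (Function.update
              (fun j => (q j).2) i c) i' d := by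
            funext j
            by_cases hji : j = i
            · subst hji
              rw [hq1i, Function.update_of_ne hne, Function.update_self]
            · by_cases hji' : j = i'
              · subst hji'
                rw [hq1i', Function.update_self]
              · rw [hq1o j hji hji', Function.update_of_ne hji', Function.update_of_ne hji]
          have h1 : M1 q1 + (q i).2 + (q i').2 = M1 q + c + d := by
            rw [M1, M1, e1]
            exact sum_update_two _ hne c d
          omega
        · have e2 : (fun j => (q1 j).1) = Function.update (Function.update
              (fun j => (q j).1) i a) i' b := by
            funext j
            by_cases hji : j = i
            · subst hji
              rw [hq1i, Function.update_of_ne hne, Function.update_self]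
            · by_cases hji' : j = i'
              · subst hji'
                rw [hq1i', Function.update_self]
              · rw [hq1o j hji hji', Function.update_of_ne hji', Function.update_of_ne hji]
          have h1 : M2 q1 + (q i).1 + (q i').1 = M2 q + a + b := by
            rw [M2, M2, e2]
            exact sum_update_two _ hne a b
          omega
        · have e3 : (fun j => (q1 j).1 * (q1 j).2) = Function.update (Function.update
              (fun j => (q j).1 * (q j).2) i (a * c)) i' (b * d) := by
            funext j
            by_cases hji : j = i
            · subst hji
              rw [hq1i, Function.update_of_ne hne, Function.update_self]
            · by_cases hji' : j = i'
              · subst hji'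
                rw [hq1i', Function.update_self]
              · rw [hq1o j hji hji', Function.update_of_ne hji', Function.update_of_ne hji]
          have h1 : MXY q1 + (q i).1 * (q i).2 + (q i').1 * (q i').2
              = MXY q + a * c + b * d := by
            rw [MXY, MXY, e3]
            exact sum_update_two _ hne (a * c) (b * d)
          have key : a * d + b * c < a * c + b * d := by
            have hza : (0:ℤ) < (b:ℤ) - (a:ℤ) := by
              have : (a:ℤ) < (b:ℤ) := by exact_mod_cast hab
              omega
            have hzc : (0:ℤ) < (d:ℤ) - (c:ℤ) := by
              have : (c:ℤ) < (d:ℤ) := by exact_mod_cast hcd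
              omega
            have hm := mul_pos hza hzc
            have : (a:ℤ) * d + b * c < a * c + b * d := by nlinarith [hm]
            exact_mod_cast this
          have hqd : (q i).1 * (q i).2 = a * d := by rw [← ha, ← hd]
          have hqc : (q i').1 * (q i').2 = b * c := by rw [← hb, ← hc]
          omega
      have hμ2 : μm n q2 < μm n q := by
        apply mu_lt hrq hr2
        left
        have e1 : (fun j => (q2 j).2) = Function.update (Function.update
            (fun j => (q j).2) i b) i' d := by
          funext j
          by_cases hji : j = i
          · subst hji
            rw [hq2i, Function.update_of_ne hne, Function.update_self]
          · by_cases hji' : j = i'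
            · subst hji'
              rw [hq2i', Function.update_self]
            · rw [hq2o j hji hji', Function.update_of_ne hji', Function.update_of_ne hji]
        have h1 : M1 q2 + (q i).2 + (q i').2 = M1 q + b + d := by
          rw [M1, M1, e1]
          exact sum_update_two _ hne b d
        omega
      rw [hid]
      exact sub_mem (ih (μm n q1) (by omega) q1 (le_refl _) hinj1 hor1 hr1)
        (ih (μm n q2) (by omega) q2 (le_refl _) hinj2 hor2 hr2)
    · -- Base case: q is the standard matching of its second row
      have hsndinj : Function.Injective (fun j => (q j).2) := snd_inj hinjq
      have hsndmono : StrictMono (fun j => (q j).2) :=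
        hmono.strictMono_of_injective hsndinj
      set ω := Finset.univ.image (fun j => (q j).2) with hω
      have hωcard : ω.card = k := by
        rw [hω, Finset.card_image_of_injective _ hsndinj, Finset.card_univ, Fintype.card_fin]
      have hωsub : ω ⊆ Finset.Icc 1 n := by
        intro x hx
        obtain ⟨j, -, hj⟩ := Finset.mem_image.mp hx
        exact hj ▸ (hrq j).2
      have hkn : k ≤ n := by omega
      have hsnd_eq : (fun j => (q j).2) = ⇑(ω.orderEmbOfFin hωcard) :=
        Finset.orderEmbOfFin_unique hωcard
          (fun j => Finset.mem_image_of_mem _ (Finset.mem_univ j)) hsndmono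
      have hfstmono : StrictMono (fun j => (q j).1) := by
        intro i i' hlt
        have hs : (q i).2 < (q i').2 := hsndmono hlt
        rcases lt_trichotomy (q i).1 (q i').1 with h | h | h
        · exact h
        · exfalso
          have : cVal q (i, false) = cVal q (i', false) := h
          have := hinjq this
          simp only [Prod.mk.injEq] at this
          exact absurd this.1 (ne_of_lt hlt)
        · exact absurd ⟨i', i, h, hs⟩ hinv
      set C := Finset.Icc 1 n \ ω with hC
      have hCcard : C.card = n - k := comp_card hωsub hωcard hkn
      have hfstC : ∀ j, (q j).1 ∈ C := by
        intro j
        rw [hC, Finset.mem_sdiff]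
        refine ⟨(hrq j).1, ?_⟩
        intro hmem
        obtain ⟨j', -, hj'⟩ := Finset.mem_image.mp hmem
        have : cVal q (j', true) = cVal q (j, false) := hj'
        have := hinjq this
        simp at this
      set hfun : Fin k → Fin (n - k) :=
        fun j => (C.orderIsoOfFin hCcard).symm ⟨(q j).1, hfstC j⟩ with hfundef
      have hembC : ∀ j, (C.orderEmbOfFin hCcard) (hfun j) = (q j).1 := by
        intro j
        rw [hfundef]
        rw [← Finset.coe_orderIsoOfFin_apply]
        rw [OrderIso.apply_symm_apply]
      have hfunmono : StrictMono hfun := by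
        intro i i' hlt
        have h1 : (C.orderEmbOfFin hCcard) (hfun i) < (C.orderEmbOfFin hCcard) (hfun i') := by
          rw [hembC, hembC]
          exact hfstmono hlt
        exact (OrderEmbedding.lt_iff_lt _).mp h1
      have hfunge : ∀ j : Fin k, j.val ≤ (hfun j).val := by
        apply fin_strictMono_le
        intro x y hxy
        exact hfunmono hxy
      by_cases hall : ∀ j : Fin k, (hfun j).val = j.val
      · -- q equals stdP n k ω
        have hthr : threshold n ω = 0 := threshold_snd_zero n hinjq horq hrq
        have hqq : q = stdP n k ω := by
          funext j
          have hjnk : j.val < n - k := by have := j.isLt; omega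
          apply Prod.ext
          · show (q j).1 = stdFst n ω j.val
            rw [stdFst_eq hωsub hωcard hkn ⟨j.val, hjnk⟩]
            rw [← hembC j]
            congr 1
            apply Fin.ext
            exact hall j
          · show (q j).2 = stdSnd ω j.val
            rw [stdSnd_eq hωcard j]
            exact congrFun hsnd_eq j
        apply Submodule.subset_span
        exact ⟨ω, hωsub, hωcard, hthr, by rw [hqq]⟩
      · -- otherwise rule (i) would apply: contradiction
        exfalso
        push_neg at hall
        have hSne : (Finset.univ.filter (fun j : Fin k => j.val < (hfun j).val)).Nonempty := by
          obtain ⟨j, hj⟩ := hall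
          exact ⟨j, Finset.mem_filter.mpr ⟨Finset.mem_univ j, lt_of_le_of_ne (hfunge j) (Ne.symm hj)⟩⟩
        set j0 := (Finset.univ.filter (fun j : Fin k => j.val < (hfun j).val)).min' hSne with hj0def
        have hj0 : j0.val < (hfun j0).val :=
          (Finset.mem_filter.mp ((Finset.univ.filter _).min'_mem hSne)).2
        have hmlt : ∀ m : Fin k, m < j0 → (hfun m).val = m.val := by
          intro m hm
          by_contra hmm
          have hmem : m ∈ Finset.univ.filter (fun j : Fin k => j.val < (hfun j).val) :=
            Finset.mem_filter.mpr ⟨Finset.mem_univ m,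
              lt_of_le_of_ne (hfunge m) (Ne.symm hmm)⟩
          have := Finset.min'_le _ m hmem
          exact absurd this (not_le.mpr hm)
        have hj0nk : j0.val < n - k := by have := j0.isLt; omega
        set i0 : Fin (n - k) := ⟨j0.val, hj0nk⟩ with hi0def
        have hi0ne : ∀ m, hfun m ≠ i0 := by
          intro m hm
          rcases lt_trichotomy m j0 with h | h | h
          · have h1 := hmlt m h
            have h2 : (hfun m).val = j0.val := by rw [hm]
            have : m.val < j0.val := h
            omega
          · rw [h] at hm
            have h3 : (hfun j0).val = j0.val := by rw [hm]
            omega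
          · have h1 : hfun j0 < hfun m := hfunmono h
            have h2 : j0.val < (hfun j0).val := hj0
            have h3 : (hfun m).val = j0.val := by rw [hm]
            have h4 : (hfun j0).val < (hfun m).val := h1
            omega
        set z := (C.orderEmbOfFin hCcard) i0 with hzdef
        apply hz
        refine ⟨z, ?_, ?_, j0, ?_⟩
        · have : z ∈ C := Finset.orderEmbOfFin_mem _ _ _
          exact (Finset.mem_sdiff.mp this).1
        · intro jb
          obtain ⟨m, bb⟩ := jb
          cases bb
          · show (q m).1 ≠ z
            rw [← hembC m, hzdef]
            intro hcon
            exact hi0ne m ((C.orderEmbOfFin hCcard).injective hcon)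
          · show (q m).2 ≠ z
            intro hcon
            have h1 : z ∈ C := Finset.orderEmbOfFin_mem _ _ _
            have h2 : (q m).2 ∈ ω := Finset.mem_image_of_mem _ (Finset.mem_univ m)
            rw [hcon] at h2
            exact (Finset.mem_sdiff.mp h1).2 h2
        · rw [← hembC j0, hzdef]
          have : i0 < hfun j0 := by
            rw [Fin.lt_def]
            exact hj0
          exact (OrderEmbedding.lt_iff_lt _).mpr this

/-! ### Orientation normalization -/

def orientP {k : ℕ} (p : Fin k → ℕ × ℕ) : Fin k → ℕ × ℕ :=
  fun j => if (p j).1 < (p j).2 then p j else ((p j).2, (p j).1)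

lemma Ppoly_orient (F : Type) [Field F] {k : ℕ} (p : Fin k → ℕ × ℕ) :
    Ppoly F p = (∏ j, (if (p j).1 < (p j).2 then (1 : F) else -1)) • Ppoly F (orientP p) := by
  rw [MvPolynomial.smul_eq_C_mul, map_prod]
  rw [Ppoly, Ppoly, ← Finset.prod_mul_distrib]
  apply Finset.prod_congr rfl
  intro j _
  by_cases h : (p j).1 < (p j).2
  · rw [if_pos h]
    simp only [orientP, if_pos h, map_one, one_mul]
  · rw [if_neg h]
    simp only [orientP, if_neg h, map_neg, map_one]
    ring

lemma orientP_entInj {k : ℕ} {p : Fin k → ℕ × ℕ} (hp : EntInj p) : EntInj (orientP p) := by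
  have hψ : Function.Involutive (fun jb : Fin k × Bool =>
      if (p jb.1).1 < (p jb.1).2 then jb else (jb.1, !jb.2)) := by
    intro ⟨j, b⟩
    by_cases h : (p j).1 < (p j).2
    · simp [h]
    · simp [h]
  apply entInj_of_comp (Function.Involutive.toPerm _ hψ) ?_ hp
  funext jb
  obtain ⟨j, b⟩ := jb
  show cVal (orientP p) (j, b) = cVal p ((Function.Involutive.toPerm _ hψ) (j, b))
  have htp : (Function.Involutive.toPerm _ hψ) (j, b) = if (p j).1 < (p j).2 then (j, b) else (j, !b) := rfl
  by_cases h : (p j).1 < (p j).2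
  · rw [htp, if_pos h]
    cases b
    · show (orientP p j).1 = (p j).1
      rw [orientP, if_pos h]
    · show (orientP p j).2 = (p j).2
      rw [orientP, if_pos h]
  · rw [htp, if_neg h]
    cases b
    · show (orientP p j).1 = cVal p (j, true)
      rw [orientP, if_neg h]
      rfl
    · show (orientP p j).2 = cVal p (j, false)
      rw [orientP, if_neg h]
      rfl

lemma orientP_oriented {k : ℕ} {p : Fin k → ℕ × ℕ} (hp : EntInj p) : Oriented (orientP p) := by
  intro j
  have hne : (p j).1 ≠ (p j).2 := by
    intro h
    have : cVal p (j, false) = cVal p (j, true) := h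
    have := hp this
    simp at this
  by_cases h : (p j).1 < (p j).2
  · rw [orientP, if_pos h]; exact h
  · rw [orientP, if_neg h]
    show (p j).2 < (p j).1
    omega

lemma orientP_inRange {n k : ℕ} {p : Fin k → ℕ × ℕ} (hr : InRange n p) :
    InRange n (orientP p) := by
  intro j
  by_cases h : (p j).1 < (p j).2
  · rw [orientP, if_pos h]; exact hr j
  · rw [orientP, if_neg h]; exact ⟨(hr j).2, (hr j).1⟩

/-- Every matching polynomial with distinct entries in range lies in the span of
standard matching polynomials. -/
lemma Ppoly_mem_span (F : Type) [Field F] {n k : ℕ} (h2k : 2 * k ≤ n)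
    {p : Fin k → ℕ × ℕ} (hp : EntInj p) (hr : InRange n p) :
    Ppoly F p ∈ Submodule.span F (SstdGen F n k) := by
  rw [Ppoly_orient F p]
  apply Submodule.smul_mem
  exact straighten F n k h2k (μm n (orientP p)) (orientP p) (le_refl _)
    (orientP_entInj hp) (orientP_oriented hp) (orientP_inRange hr)

/-- tableaux give valid matchings -/
lemma tab_entInj {n k : ℕ} {a : ℕ → ℕ} {b : Fin k → ℕ} (h2k : 2 * k ≤ n)
    (ht : IsTableau n k a b) : EntInj (fun j : Fin k => (a j.val, b j)) := by
  obtain ⟨ha, hb, hab, -⟩ := ht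
  intro ⟨j, bb⟩ ⟨j', bb'⟩ h
  have hjnk : ∀ j : Fin k, j.val < n - k := by intro j; have := j.isLt; omega
  match bb, bb' with
  | true, true =>
      have : b j = b j' := h
      rw [hb this]
  | true, false =>
      exact absurd h (hab j (j'.val) (hjnk j'))
  | false, true =>
      exact absurd h.symm (hab j' (j.val) (hjnk j))
  | false, false =>
      have : a j.val = a j'.val := h
      have := ha (Set.mem_Iio.mpr (hjnk j)) (Set.mem_Iio.mpr (hjnk j')) this
      have : j = j' := Fin.ext this
      rw [this]

lemma tab_inRange {n k : ℕ} {a : ℕ → ℕ} {b : Fin k → ℕ} (h2k : 2 * k ≤ n)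
    (ht : IsTableau n k a b) : InRange n (fun j : Fin k => (a j.val, b j)) := by
  obtain ⟨-, -, -, hun⟩ := ht
  intro j
  have hjnk : j.val < n - k := by have := j.isLt; omega
  constructor
  · rw [← hun]
    apply Finset.mem_union_left
    exact Finset.mem_image_of_mem _ (Finset.mem_range.mpr hjnk)
  · rw [← hun]
    apply Finset.mem_union_right
    exact Finset.mem_image_of_mem _ (Finset.mem_univ j)

/-! ### The standard tableau of a threshold-zero set -/

lemma std_isTableau {n k : ℕ} {ω : Finset ℕ} (hsub : ω ⊆ Finset.Icc 1 n) (hcard : ω.card = k)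
    (h2k : 2 * k ≤ n) :
    IsTableau n k (stdFst n ω) (fun j : Fin k => stdSnd ω j.val) := by
  have hkn : k ≤ n := by omega
  have hc := comp_card hsub hcard hkn
  refine ⟨?_, ?_, ?_, ?_⟩
  · intro i hi i' hi' h
    rw [Set.mem_Iio] at hi hi'
    have e1 : stdFst n ω i = (Finset.Icc 1 n \ ω).orderEmbOfFin hc ⟨i, hi⟩ :=
      stdFst_eq hsub hcard hkn ⟨i, hi⟩
    have e2 : stdFst n ω i' = (Finset.Icc 1 n \ ω).orderEmbOfFin hc ⟨i', hi'⟩ :=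
      stdFst_eq hsub hcard hkn ⟨i', hi'⟩
    rw [e1, e2] at h
    have := (Finset.orderEmbOfFin _ _).injective h
    have hvv : i = i' := by injection this
    exact hvv
  · intro j j' h
    have e1 : stdSnd ω j.val = ω.orderEmbOfFin hcard j := stdSnd_eq hcard j
    have e2 : stdSnd ω j'.val = ω.orderEmbOfFin hcard j' := stdSnd_eq hcard j'
    simp only at h
    rw [e1, e2] at h
    exact (ω.orderEmbOfFin hcard).injective h
  · intro j j' hj' h
    have h1 : stdSnd ω j.val ∈ ω := stdSnd_mem hcard j
    have h2 : stdFst n ω j' ∈ Finset.Icc 1 n \ ω := by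
      have := stdFst_eq hsub hcard hkn ⟨j', hj'⟩
      rw [this]
      exact Finset.orderEmbOfFin_mem _ _ _
    have h' : stdSnd ω j.val = stdFst n ω j' := h
    rw [h'] at h1
    exact (Finset.mem_sdiff.mp h2).2 h1
  · have himga : (Finset.range (n - k)).image (stdFst n ω) = Finset.Icc 1 n \ ω := by
      ext z
      rw [Finset.mem_image]
      constructor
      · rintro ⟨i, hi, rfl⟩
        rw [Finset.mem_range] at hi
        have := stdFst_eq hsub hcard hkn ⟨i, hi⟩
        rw [this]
        exact Finset.orderEmbOfFin_mem _ _ _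
      · intro hz
        have : z ∈ Set.range ⇑((Finset.Icc 1 n \ ω).orderEmbOfFin hc) := by
          rw [Finset.range_orderEmbOfFin]
          exact hz
        obtain ⟨i0, hi0⟩ := this
        refine ⟨i0.val, Finset.mem_range.mpr i0.isLt, ?_⟩
        rw [stdFst_eq hsub hcard hkn i0]
        exact hi0
    have himgb : Finset.univ.image (fun j : Fin k => stdSnd ω j.val) = ω := by
      have hb : (fun j : Fin k => stdSnd ω j.val) = fun j => (stdP n k ω j).2 := rfl
      rw [hb]
      exact stdP_sndImage hcard
    rw [himga, himgb]
    exact Finset.sdiff_union_of_subset hsub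

/-- Spanning: every basis vector of `FΩ_k` lies in `A ⊔ B`. -/
lemma single_mem_sup (F : Type) [Field F] (n k : ℕ) (h2k : 2 * k ≤ n) :
    ∀ (s : ℕ) (ω : Finset ℕ), ω.sum id = s → ω ⊆ Finset.Icc 1 n → ω.card = k →
      Finsupp.single ω (1 : F) ∈
        (Submodule.span F {x : Finset ℕ →₀ F | ∃ ω : Finset ℕ,
            ω ⊆ Finset.Icc 1 n ∧ ω.card = k ∧ 0 < threshold n ω ∧ x = Finsupp.single ω 1}
          ⊔ Submodule.span F {x : Finset ℕ →₀ F | ∃ a b,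
              IsTableau n k a b ∧ x = polytabloid F k a b}) := by
  intro s
  induction s using Nat.strong_induction_on with
  | _ s ih =>
  intro ω hsum hsub hcard
  by_cases hth : threshold n ω = 0
  · -- use the standard polytabloid
    have htab := std_isTableau hsub hcard h2k
    have hBmem : polytabloid F k (stdFst n ω) (fun j : Fin k => stdSnd ω j.val) ∈
        Submodule.span F {x : Finset ℕ →₀ F | ∃ a b,
          IsTableau n k a b ∧ x = polytabloid F k a b} :=
      Submodule.subset_span ⟨_, _, htab, rfl⟩
    have hPeq : polytabloid F k (stdFst n ω) (fun j : Fin k => stdSnd ω j.val)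
        = ∑ ε : Finset (Fin k), ((-1 : F) ^ ε.card) • Finsupp.single
            (Finset.univ.image fun j =>
              if j ∈ ε then (stdP n k ω j).1 else (stdP n k ω j).2) 1 := by
      rw [polytabloid_eq, EL]
      rfl
    have hEnt := stdP_entInj hsub hcard h2k
    have hOr : Oriented (stdP n k ω) := fun j => std_oriented hsub hcard h2k hth j
    have hIR := stdP_inRange hsub hcard h2k
    have hempt : (Finset.univ.image fun j =>
        if j ∈ (∅ : Finset (Fin k)) then (stdP n k ω j).1 else (stdP n k ω j).2) = ω := by
      have : (fun j => if j ∈ (∅ : Finset (Fin k)) then (stdP n k ω j).1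
          else (stdP n k ω j).2) = fun j => (stdP n k ω j).2 := by
        funext j
        simp
      rw [this]
      exact stdP_sndImage hcard
    have hsplit : polytabloid F k (stdFst n ω) (fun j : Fin k => stdSnd ω j.val)
        = (∑ ε ∈ Finset.univ.erase (∅ : Finset (Fin k)), ((-1 : F) ^ ε.card) •
            Finsupp.single (Finset.univ.image fun j =>
              if j ∈ ε then (stdP n k ω j).1 else (stdP n k ω j).2) 1)
          + Finsupp.single ω (1 : F) := by
      rw [hPeq, ← Finset.sum_erase_add Finset.univ _ (Finset.mem_univ (∅ : Finset (Fin k)))]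
      rw [hempt]
      simp
    have hωeq : Finsupp.single ω (1 : F) = polytabloid F k (stdFst n ω)
        (fun j : Fin k => stdSnd ω j.val)
        - ∑ ε ∈ Finset.univ.erase (∅ : Finset (Fin k)), ((-1 : F) ^ ε.card) •
            Finsupp.single (Finset.univ.image fun j =>
              if j ∈ ε then (stdP n k ω j).1 else (stdP n k ω j).2) 1 := by
      rw [hsplit]
      abel
    rw [hωeq]
    apply sub_mem
    · exact Submodule.mem_sup_right hBmem
    · apply sum_mem
      intro ε hε
      apply Submodule.smul_mem
      have hεne : ε.Nonempty :=
        Finset.nonempty_iff_ne_empty.mpr (Finset.ne_of_mem_erase hε)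
      set T := Finset.univ.image fun j =>
        if j ∈ ε then (stdP n k ω j).1 else (stdP n k ω j).2 with hT
      have hTsub : T ⊆ Finset.Icc 1 n := by
        intro z hz
        obtain ⟨j, -, hj⟩ := Finset.mem_image.mp hz
        by_cases h : j ∈ ε
        · rw [if_pos h] at hj; exact hj ▸ (hIR j).1
        · rw [if_neg h] at hj; exact hj ▸ (hIR j).2
      have hTcard : T.card = k := by
        rw [hT, Finset.card_image_of_injective _ (choice_inj hEnt ε), Finset.card_univ,
          Fintype.card_fin]
      have hTsum : T.sum id < s := by
        rw [hT, sum_choice hEnt ε]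
        have h1 := sum_choice_lt hOr hεne
        have h2 : (Finset.univ.image fun j => (stdP n k ω j).2).sum id
            = ∑ j, (stdP n k ω j).2 := sum_snd_set hEnt
        rw [stdP_sndImage hcard] at h2
        omega
      exact ih (T.sum id) hTsum T rfl hTsub hTcard
  · have hpos : 0 < threshold n ω := Nat.pos_of_ne_zero hth
    exact Submodule.mem_sup_left (Submodule.subset_span ⟨ω, hsub, hcard, hpos, rfl⟩)


end AuxOmegaDecomp

open Finset MvPolynomial in
/-- for `2k ≤ n`, `FΩ_k` decomposes as a direct sum of `F`-vector
spaces `FΩ_k = FΩ_k^{>0} ⊕ S^{k,k}`, where `FΩ_k^{>0}` is spanned by the `k`-subsets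
of positive threshold and `S^{k,k}` is spanned by all polytabloids. -/
theorem omega_decomposition (F : Type) [Field F] (n k : ℕ) (h2k : 2 * k ≤ n) :
    (Submodule.span F {x : Finset ℕ →₀ F | ∃ ω : Finset ℕ,
        ω ⊆ Finset.Icc 1 n ∧ ω.card = k ∧ 0 < threshold n ω ∧ x = Finsupp.single ω 1}
      ⊓ Submodule.span F {x : Finset ℕ →₀ F | ∃ a b,
          IsTableau n k a b ∧ x = polytabloid F k a b} = ⊥) ∧
    (Submodule.span F {x : Finset ℕ →₀ F | ∃ ω : Finset ℕ,
        ω ⊆ Finset.Icc 1 n ∧ ω.card = k ∧ 0 < threshold n ω ∧ x = Finsupp.single ω 1}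
      ⊔ Submodule.span F {x : Finset ℕ →₀ F | ∃ a b,
          IsTableau n k a b ∧ x = polytabloid F k a b}
      = Submodule.span F {x : Finset ℕ →₀ F | ∃ ω : Finset ℕ,
          ω ⊆ Finset.Icc 1 n ∧ ω.card = k ∧ x = Finsupp.single ω 1}) := by
  classical
  constructor
  · -- trivial intersection
    rw [eq_bot_iff]
    rintro x ⟨hxA, hxB⟩
    rw [SetLike.mem_coe] at hxA hxB
    simp only [Submodule.mem_bot]
    -- every element of A vanishes on threshold-zero coordinates
    have hvan : ∀ v ∈ Submodule.span F {x : Finset ℕ →₀ F | ∃ ω : Finset ℕ,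
        ω ⊆ Finset.Icc 1 n ∧ ω.card = k ∧ 0 < threshold n ω ∧ x = Finsupp.single ω 1},
        ∀ S : Finset ℕ, threshold n S = 0 → v S = 0 := by
      intro v hv
      induction hv using Submodule.span_induction with
      | mem v hvmem =>
          obtain ⟨ω', -, -, hpos, rfl⟩ := hvmem
          intro S hS
          rw [Finsupp.single_apply, if_neg]
          intro hcon
          rw [hcon, hS] at hpos
          exact lt_irrefl 0 hpos
      | zero => intro S _; simp
      | add u w hu hw ihu ihw => intro S hS; simp [ihu S hS, ihw S hS]
      | smul r u hu ihu => intro S hS; simp [ihu S hS]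
    -- B is contained in the image of the span of standard polynomials
    have hBle : Submodule.span F {x : Finset ℕ →₀ F | ∃ a b,
        IsTableau n k a b ∧ x = polytabloid F k a b}
        ≤ Submodule.map (LL F) (Submodule.span F (SstdGen F n k)) := by
      rw [Submodule.span_le]
      rintro v ⟨a, b, htab, rfl⟩
      rw [SetLike.mem_coe, polytabloid_eq]
      exact ⟨Ppoly F (fun j : Fin k => (a j.val, b j)),
        Ppoly_mem_span F h2k (tab_entInj h2k htab) (tab_inRange h2k htab), rfl⟩
    obtain ⟨w, hw, rfl⟩ := hBle hxB
    rw [SetLike.mem_coe, Submodule.mem_span_set] at hw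
    obtain ⟨c, hcsupp, hcsum⟩ := hw
    by_cases hc : c = 0
    · subst hc
      rw [← hcsum]
      simp [Finsupp.sum]
    · exfalso
      have hsupp : c.support.Nonempty := Finsupp.support_nonempty_iff.mpr hc
      have hchoice : ∀ g ∈ SstdGen F n k, ∃ ω : Finset ℕ, ω ⊆ Finset.Icc 1 n ∧
          ω.card = k ∧ threshold n ω = 0 ∧ g = Ppoly F (stdP n k ω) := fun g hg => hg
      choose ωof hω1 hω2 hω3 hω4 using hchoice
      set f : MvPolynomial ℕ F → ℕ := fun g =>
        if h : g ∈ SstdGen F n k then (ωof g h).sum id else 0 with hf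
      obtain ⟨g0, hg0, hmax⟩ := c.support.exists_max_image f hsupp
      have hg0' : g0 ∈ SstdGen F n k := hcsupp hg0
      set Ω := ωof g0 hg0' with hΩ
      -- evaluate x at Ω
      have hxval : (LL F w) Ω = ∑ g ∈ c.support, c g * (LL F g) Ω := by
        rw [← hcsum, Finsupp.sum, map_sum, Finsupp.finset_sum_apply]
        apply Finset.sum_congr rfl
        intro g _
        rw [map_smul, Finsupp.smul_apply, smul_eq_mul]
      have hterm : ∀ g ∈ c.support, g ≠ g0 → (LL F g) Ω = 0 := by
        intro g hg hne
        have hg' : g ∈ SstdGen F n k := hcsupp hg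
        by_contra hne0
        have hfacts := coeff_facts F (stdP_entInj (hω1 g hg') (hω2 g hg') h2k)
          (fun j => std_oriented (hω1 g hg') (hω2 g hg') h2k (hω3 g hg') j)
          (stdP_inRange (hω1 g hg') (hω2 g hg') h2k)
          (S := Ω) (by rw [← hω4 g hg']; exact hne0)
        obtain ⟨-, -, hle, heq⟩ := hfacts
        rw [stdP_sndImage (hω2 g hg')] at hle heq
        have hmax' := hmax g hg
        rw [hf] at hmax'
        simp only [dif_pos hg', dif_pos hg0'] at hmax'
        have hΩs : Ω.sum id = (ωof g0 hg0').sum id := by rw [hΩ]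
        have hsums : Ω.sum id = (ωof g hg').sum id := by omega
        have hΩeq : Ω = ωof g hg' := heq hsums
        have : g = g0 := by
          rw [hω4 g hg', hω4 g0 hg0', ← hΩ, ← hΩeq]
        exact hne this
      have hlead : (LL F g0) Ω = 1 := by
        rw [hω4 g0 hg0']
        have := lead_coeff F (stdP_entInj (hω1 g0 hg0') (hω2 g0 hg0') h2k)
          (fun j => std_oriented (hω1 g0 hg0') (hω2 g0 hg0') h2k (hω3 g0 hg0') j)
        rw [stdP_sndImage (hω2 g0 hg0')] at this
        exact this
      have hxval2 : (LL F w) Ω = c g0 := by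
        rw [hxval]
        rw [Finset.sum_eq_single g0]
        · rw [hlead, mul_one]
        · intro g hg hne
          rw [hterm g hg hne, mul_zero]
        · intro h; exact absurd hg0 h
      have hzero := hvan (LL F w) hxA Ω (hω3 g0 hg0')
      rw [hxval2] at hzero
      exact (Finsupp.mem_support_iff.mp hg0) hzero
  · -- the sum is everything
    apply le_antisymm
    · apply sup_le
      · rw [Submodule.span_le]
        rintro v ⟨ω, hsub, hcard, -, rfl⟩
        exact Submodule.subset_span ⟨ω, hsub, hcard, rfl⟩
      · rw [Submodule.span_le]
        rintro v ⟨a, b, htab, rfl⟩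
        rw [SetLike.mem_coe, polytabloid_eq, EL]
        apply sum_mem
        intro ε _
        apply Submodule.smul_mem
        apply Submodule.subset_span
        refine ⟨Finset.univ.image fun j =>
          if j ∈ ε then ((fun j : Fin k => (a j.val, b j)) j).1
          else ((fun j : Fin k => (a j.val, b j)) j).2, ?_, ?_, rfl⟩
        · intro z hz
          obtain ⟨j, -, hj⟩ := Finset.mem_image.mp hz
          by_cases h : j ∈ ε
          · rw [if_pos h] at hj
            exact hj ▸ (tab_inRange h2k htab j).1
          · rw [if_neg h] at hj
            exact hj ▸ (tab_inRange h2k htab j).2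
        · rw [Finset.card_image_of_injective _ (choice_inj (tab_entInj h2k htab) ε),
            Finset.card_univ, Fintype.card_fin]
    · rw [Submodule.span_le]
      rintro v ⟨ω, hsub, hcard, rfl⟩
      exact single_mem_sup F n k h2k (ω.sum id) ω rfl hsub hcard
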